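/- Let S_A be a d×d Metzler sign-matrix and ℓ ≠ 1. The following are equivalent: (a) all matrices in Q(S_A) are Hurwitz stable, and for every A ∈ Q(S_A) there exists w ∈ ℝ^d_{≥0} with w₁ > 0 and wᵀA + e_ℓᵀ = 0; (b) the diagonal entries of S_A are negative and the digraph G_{S_A} is acyclic and contains a directed path from node 1 to node ℓ. -/

import Mathlib

open Matrix

variable {d : ℕ}

/-- A real square matrix is Metzler if all its off-diagonal entries are nonnegative. -/
def Metzler (M : Matrix (Fin d) (Fin d) ℝ) : Prop :=
  ∀ i j, i ≠ j → 0 ≤ M i j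

/-- A real square matrix is Hurwitz stable if all its (complex) eigenvalues,
i.e. all roots of its characteristic polynomial, have strictly negative real part. -/
def IsHurwitz (M : Matrix (Fin d) (Fin d) ℝ) : Prop :=
  ∀ z : ℂ, (M.map (Complex.ofReal)).charpoly.IsRoot z → z.re < 0

/-- The directed graph associated with a matrix: edge from `m` to `n` iff `m ≠ n`
and the `(n, m)` entry of `M` is nonzero. -/
def edgeRel (M : Matrix (Fin d) (Fin d) ℝ) (m n : Fin d) : Prop :=
  m ≠ n ∧ M n m ≠ 0

open Polynomial

namespace StructErg


lemma walk_transGen {α : Type*} {r : α → α → Prop} (f : ℕ → α) :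
    ∀ (t s : ℕ), s < t → (∀ u, s ≤ u → u < t → r (f u) (f (u + 1))) →
      Relation.TransGen r (f s) (f t) := by
  intro t
  induction t with
  | zero => intro s hs; omega
  | succ t ih =>
    intro s hs h
    rcases Nat.lt_or_ge s t with h' | h'
    · exact (ih s h' fun u hu hu2 => h u hu (by omega)).tail (h t (by omega) (by omega))
    · have hst : s = t := by omega
      subst hst
      exact Relation.TransGen.single (h s le_rfl (by omega))

lemma walk_lt_of_acyclic {r : Fin d → Fin d → Prop}
    (hac : ∀ m, ¬ Relation.TransGen r m m) {f : ℕ → Fin d} {n : ℕ}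
    (hf : ∀ u, u < n → r (f u) (f (u + 1))) : n < d := by
  by_contra hn
  push_neg at hn
  obtain ⟨s, t, hst, he⟩ := Fintype.exists_ne_map_eq_of_card_lt
    (fun u : Fin (d + 1) => f u) (by simp)
  rcases Ne.lt_or_gt (fun h : (s:ℕ) = (t:ℕ) => hst (Fin.ext h)) with h | h
  · exact hac (f s) (by
      have := walk_transGen f (t : ℕ) s h (fun u hu hu2 => hf u (by omega))
      rwa [← he] at this)
  · exact hac (f t) (by
      have := walk_transGen f (s : ℕ) t h (fun u hu hu2 => hf u (by omega))
      rwa [he] at this)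

lemma transGen_walk {α : Type*} {r : α → α → Prop} {a b : α} (h : Relation.TransGen r a b) :
    ∃ n : ℕ, 0 < n ∧ ∃ f : ℕ → α, f 0 = a ∧ f n = b ∧ ∀ u, u < n → r (f u) (f (u + 1)) := by
  induction h with
  | @single c hab =>
    refine ⟨1, one_pos, fun u => if u = 0 then a else c, by simp, by simp, ?_⟩
    intro u hu
    have : u = 0 := by omega
    subst this
    simpa using hab
  | @tail b' c' hab hbc ih =>
    obtain ⟨n, hn, f, h0, hnb, hf⟩ := ih
    refine ⟨n + 1, by omega, fun u => if u ≤ n then f u else c', by simp [h0], by simp, ?_⟩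
    intro u hu
    rcases Nat.lt_or_ge u n with h' | h'
    · simpa [Nat.le_of_lt h', Nat.succ_le_of_lt h'] using hf u h'
    · have hu' : u = n := by omega
      subst hu'
      simpa [hnb] using hbc


lemma closed_walk_simple {r : Fin d → Fin d → Prop} :
    ∀ n : ℕ, 0 < n → ∀ f : ℕ → Fin d, f n = f 0 →
      (∀ u, u < n → r (f u) (f (u + 1))) →
      ∃ n' : ℕ, 0 < n' ∧ ∃ f' : ℕ → Fin d, f' n' = f' 0 ∧
        (∀ u, u < n' → r (f' u) (f' (u + 1))) ∧ Set.InjOn f' (Set.Iio n') := by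
  intro n
  induction n using Nat.strong_induction_on with
  | _ n ih =>
    intro hn f hcl he
    by_cases hinj : Set.InjOn f (Set.Iio n)
    · exact ⟨n, hn, f, hcl, he, hinj⟩
    · rw [Set.InjOn] at hinj
      push_neg at hinj
      obtain ⟨s, hs, t, ht, heq, hne⟩ := hinj
      simp only [Set.mem_Iio] at hs ht
      -- wlog s < t
      rcases hne.lt_or_gt with hlt | hlt
      · exact ih (t - s) (by omega) (by omega) (fun u => f (s + u))
          (by
            show f (s + (t - s)) = f (s + 0)
            have h1 : s + (t - s) = t := by omega
            have h2 : s + 0 = s := by omega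
            rw [h1, h2]
            exact heq.symm)
          (fun u hu => by
            have h1 : s + u + 1 = s + (u + 1) := by omega
            have := he (s + u) (by omega)
            rwa [h1] at this)
      · exact ih (s - t) (by omega) (by omega) (fun u => f (t + u))
          (by
            show f (t + (s - t)) = f (t + 0)
            have h1 : t + (s - t) = s := by omega
            have h2 : t + 0 = t := by omega
            rw [h1, h2]
            exact heq)
          (fun u hu => by
            have h1 : t + u + 1 = t + (u + 1) := by omega
            have := he (t + u) (by omega)
            rwa [h1] at this)

lemma exists_cycle_perm {S : Matrix (Fin d) (Fin d) ℝ} {m : Fin d}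
    (h : Relation.TransGen (edgeRel S) m m) :
    ∃ σ : Equiv.Perm (Fin d), σ.IsCycle ∧ ∀ v, σ v ≠ v → S (σ v) v ≠ 0 := by
  obtain ⟨n0, hn0, f0, h00, h0n, he0⟩ := transGen_walk h
  obtain ⟨n, hn, f, hcl, he, hinj⟩ :=
    closed_walk_simple n0 hn0 f0 (by rw [h0n, h00]) he0
  have hn2 : 2 ≤ n := by
    rcases Nat.lt_or_ge n 2 with h2 | h2
    · interval_cases n
      · exact absurd ((he 0 (by omega)).1) (by simp [← hcl])
    · exact h2
  set l : List (Fin d) := (List.range n).map f with hl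
  have hlen : l.length = n := by simp [hl]
  have hget : ∀ i (hi : i < l.length), l[i] = f i := by
    intro i hi
    simp [hl]
  have hnodup : l.Nodup := by
    refine List.Nodup.map_on ?_ List.nodup_range
    intro x hx y hy hxy
    exact hinj (by simpa using List.mem_range.mp hx) (by simpa using List.mem_range.mp hy) hxy
  refine ⟨l.formPerm, List.isCycle_formPerm hnodup (by omega), ?_⟩
  intro v hv
  have hvl : v ∈ l := by
    have := List.support_formPerm_le' l hv
    simpa using this
  obtain ⟨i, hi, hfi⟩ := List.mem_iff_getElem.mp hvl
  have hmod : (i + 1) % l.length < l.length := Nat.mod_lt _ (by omega)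
  have happ : l.formPerm v = l[(i + 1) % l.length]'hmod := by
    rw [← hfi, List.formPerm_apply_getElem l hnodup i hi]
  rcases Nat.lt_or_ge (i + 1) n with hlt | hge
  · have : l.formPerm v = f (i + 1) := by
      rw [happ, hget]
      exact congrArg f (by rw [hlen]; exact Nat.mod_eq_of_lt hlt)
    rw [this, ← hfi, hget]
    exact (he i (by omega)).2
  · have hii : i + 1 = n := by omega
    have : l.formPerm v = f 0 := by
      rw [happ, hget]
      exact congrArg f (by rw [hlen, hii, Nat.mod_self])
    rw [this, ← hfi, hget, ← hcl, ← hii]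
    exact (he i (by omega)).2




/-- In an "acyclic" pattern, every nonidentity permutation has a vanishing entry. -/
lemma exists_zero_entry {R : Type*} [CommRing R] {S : Matrix (Fin d) (Fin d) ℝ}
    (hac : ∀ m, ¬ Relation.TransGen (edgeRel S) m m)
    {B : Matrix (Fin d) (Fin d) R}
    (h0 : ∀ i j, i ≠ j → S i j = 0 → B i j = 0)
    {τ : Equiv.Perm (Fin d)} (hτ : τ ≠ 1) :
    ∃ j, B (τ j) j = 0 := by
  by_contra hB
  push_neg at hB
  obtain ⟨j0, hj0⟩ : ∃ j0, τ j0 ≠ j0 := by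
    by_contra hall
    push_neg at hall
    exact hτ (Equiv.ext fun x => hall x)
  have hmove : ∀ u : ℕ, τ ((τ ^ u) j0) ≠ (τ ^ u) j0 := by
    intro u hfix
    apply hj0
    have hc : (τ ^ u) (τ j0) = τ ((τ ^ u) j0) := by
      rw [← Equiv.Perm.mul_apply, ← Equiv.Perm.mul_apply, ← pow_succ, ← pow_succ']
    exact (τ ^ u).injective (by rw [hc, hfix])
  have hedge : ∀ u : ℕ, edgeRel S ((τ ^ u) j0) ((τ ^ (u + 1)) j0) := by
    intro u
    have hm := hmove u
    have happ : (τ ^ (u + 1)) j0 = τ ((τ ^ u) j0) := by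
      rw [pow_succ', Equiv.Perm.mul_apply]
    refine ⟨?_, ?_⟩
    · rw [happ]; exact fun hh => hm hh.symm
    · rw [happ]
      intro hS
      exact hB ((τ ^ u) j0) (h0 _ _ hm hS)
  have hord : (τ ^ (orderOf τ)) j0 = (τ ^ 0) j0 := by
    rw [pow_orderOf_eq_one]; rfl
  have hpos : 0 < orderOf τ := orderOf_pos τ
  have hw := walk_transGen (fun u => (τ ^ u) j0) (orderOf τ) 0 hpos
    (fun u _ hu => hedge u)
  rw [hord] at hw
  exact hac _ hw

lemma det_eq_prod_diag_of_acyclic {R : Type*} [CommRing R] (S : Matrix (Fin d) (Fin d) ℝ)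
    (hac : ∀ m, ¬ Relation.TransGen (edgeRel S) m m)
    (B : Matrix (Fin d) (Fin d) R)
    (h0 : ∀ i j, i ≠ j → S i j = 0 → B i j = 0) :
    B.det = ∏ i, B i i := by
  rw [Matrix.det_apply]
  rw [Finset.sum_eq_single_of_mem (1 : Equiv.Perm (Fin d)) (Finset.mem_univ _)]
  · simp
  · intro τ _ hτ
    obtain ⟨j, hj⟩ := exists_zero_entry hac h0 hτ
    have hz : ∏ i, B (τ i) i = 0 := Finset.prod_eq_zero (Finset.mem_univ j) hj
    rw [hz, smul_zero]




lemma charpoly_eval (A : Matrix (Fin d) (Fin d) ℝ) (t : ℝ) :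
    A.charpoly.eval t = (Matrix.diagonal (fun _ => t) - A).det := by
  have h1 : A.charpoly.eval t = Polynomial.evalRingHom t (charmatrix A).det := rfl
  rw [h1, RingHom.map_det]
  congr 1
  ext i j
  by_cases h : i = j
  · subst h
    simp [RingHom.mapMatrix_apply, Matrix.map_apply, charmatrix_apply_eq]
  · simp [RingHom.mapMatrix_apply, Matrix.map_apply, charmatrix_apply_ne _ _ _ h,
      Matrix.diagonal_apply_ne _ h]

lemma charpoly_complex_map (A : Matrix (Fin d) (Fin d) ℝ) :
    (A.map (Complex.ofReal)).charpoly = A.charpoly.map Complex.ofRealHom :=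
  Matrix.charpoly_map A Complex.ofRealHom

lemma hurwitz_charpoly_pos [NeZero d] (A : Matrix (Fin d) (Fin d) ℝ) (h : IsHurwitz A) :
    ∀ t : ℝ, 0 ≤ t → 0 < A.charpoly.eval t := by
  have hnoroot : ∀ s : ℝ, 0 ≤ s → A.charpoly.eval s ≠ 0 := by
    intro s hs h0
    have hroot : (A.map (Complex.ofReal)).charpoly.IsRoot (s : ℂ) := by
      rw [charpoly_complex_map]
      show eval (Complex.ofRealHom s) (A.charpoly.map Complex.ofRealHom) = 0
      rw [Polynomial.eval_map, Polynomial.eval₂_at_apply, h0, map_zero]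
    have := h _ hroot
    rw [Complex.ofReal_re] at this
    linarith
  have hmon := A.charpoly_monic
  have hdeg : 0 < A.charpoly.degree := by
    apply Polynomial.natDegree_pos_iff_degree_pos.mp
    rw [Matrix.charpoly_natDegree_eq_dim]
    simp [Nat.pos_of_ne_zero (NeZero.ne d)]
  have htend := Polynomial.tendsto_atTop_of_leadingCoeff_nonneg A.charpoly hdeg
    (by rw [hmon.leadingCoeff]; norm_num)
  intro t ht
  by_contra hnp
  push_neg at hnp
  have hlt : A.charpoly.eval t < 0 := lt_of_le_of_ne hnp (hnoroot t ht)
  obtain ⟨T, hT1, hT2⟩ :=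
    ((htend.eventually_ge_atTop 1).and (Filter.eventually_ge_atTop t)).exists
  have hcont : ContinuousOn (fun x => A.charpoly.eval x) (Set.Icc t T) :=
    (Polynomial.continuous _).continuousOn
  have h0mem : (0 : ℝ) ∈ Set.Icc (A.charpoly.eval t) (A.charpoly.eval T) :=
    ⟨le_of_lt hlt, by linarith⟩
  obtain ⟨s, hs, hseval⟩ := intermediate_value_Icc hT2 hcont h0mem
  exact hnoroot s (le_trans ht hs.1) hseval

lemma msum_nonpos (s : Multiset ℝ) (h : ∀ x ∈ s, x ≤ 0) : s.sum ≤ 0 := by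
  induction s using Multiset.induction_on with
  | empty => simp
  | cons a t ih =>
    rw [Multiset.sum_cons]
    have h1 := h a (Multiset.mem_cons_self a t)
    have h2 := ih fun x hx => h x (Multiset.mem_cons_of_mem hx)
    linarith

lemma hurwitz_trace_neg [NeZero d] (A : Matrix (Fin d) (Fin d) ℝ) (h : IsHurwitz A) :
    A.trace < 0 := by
  set p := (A.map (Complex.ofReal)).charpoly with hp
  have hsum : (A.map (Complex.ofReal)).trace = p.roots.sum :=
    Matrix.trace_eq_sum_roots_charpoly _
  have htr : (A.map (Complex.ofReal)).trace = ((A.trace : ℝ) : ℂ) := by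
    simp only [Matrix.trace, Matrix.diag, Matrix.map_apply]
    rw [Complex.ofReal_sum]
  have hcard : p.roots.card = d := by
    have hsp : p.Splits := IsAlgClosed.splits p
    rw [(Polynomial.splits_iff_card_roots).mp hsp, Matrix.charpoly_natDegree_eq_dim,
      Fintype.card_fin]
  have hre : A.trace = (p.roots.map Complex.re).sum := by
    have h2 := congrArg Complex.re (htr.symm.trans hsum)
    rw [Complex.ofReal_re] at h2
    rw [h2]
    exact map_multiset_sum Complex.reAddGroupHom p.roots
  obtain ⟨z, hz⟩ : ∃ z, z ∈ p.roots := by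
    apply Multiset.exists_mem_of_ne_zero
    intro h0
    rw [h0] at hcard
    simp at hcard
    exact (NeZero.ne d) hcard.symm
  obtain ⟨s, hzs⟩ := Multiset.exists_cons_of_mem hz
  have hroots : ∀ w ∈ p.roots, w.re < 0 := fun w hw =>
    h w (Polynomial.isRoot_of_mem_roots hw)
  rw [hre, hzs, Multiset.map_cons, Multiset.sum_cons]
  have hz1 : z.re < 0 := hroots z hz
  have hs1 : (s.map Complex.re).sum ≤ 0 := by
    apply msum_nonpos
    intro x hx
    obtain ⟨w, hw, hwx⟩ := Multiset.mem_map.mp hx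
    rw [← hwx]
    exact le_of_lt (hroots w (by rw [hzs]; exact Multiset.mem_cons_of_mem hw))
  linarith


lemma hurwitz_of_acyclic (S A : Matrix (Fin d) (Fin d) ℝ)
    (hac : ∀ m, ¬ Relation.TransGen (edgeRel S) m m)
    (h0 : ∀ i j, i ≠ j → S i j = 0 → A i j = 0)
    (hdiag : ∀ i, A i i < 0) : IsHurwitz A := by
  have hcp : (A.map (Complex.ofReal)).charpoly = ∏ i, (X - C ((A i i : ℝ) : ℂ)) := by
    show (charmatrix (A.map Complex.ofReal)).det = _
    rw [det_eq_prod_diag_of_acyclic S hac _ ?_]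
    · apply Finset.prod_congr rfl
      intro i _
      rw [charmatrix_apply_eq, Matrix.map_apply]
    · intro i j hij hS
      rw [charmatrix_apply_ne _ _ _ hij, Matrix.map_apply, h0 i j hij hS]
      simp
  intro z hz
  rw [hcp] at hz
  have hprod : (∏ i, (z - ((A i i : ℝ) : ℂ))) = 0 := by
    simpa [Polynomial.IsRoot, Polynomial.eval_prod] using hz
  obtain ⟨i, _, hi⟩ := Finset.prod_eq_zero_iff.mp hprod
  rw [sub_eq_zero.mp hi, Complex.ofReal_re]
  exact hdiag i

lemma exists_w [NeZero d] (S A : Matrix (Fin d) (Fin d) ℝ)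
    (hac : ∀ m, ¬ Relation.TransGen (edgeRel S) m m)
    (h0 : ∀ i j, A i j = 0 ↔ S i j = 0)
    (hoff : ∀ i j, i ≠ j → 0 ≤ A i j)
    (hdiag : ∀ i, A i i < 0)
    (ℓ : Fin d) (hpath : Relation.TransGen (edgeRel S) 0 ℓ) :
    ∃ w : Fin d → ℝ, (∀ i, 0 ≤ w i) ∧ 0 < w 0 ∧ w ᵥ* A + Pi.single ℓ 1 = 0 := by
  classical
  set D := Matrix.diagonal (fun i => -(A i i)) with hD
  set E := Matrix.diagonal (fun i => (-(A i i))⁻¹) with hE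
  have hdpos : ∀ i, 0 < -(A i i) := fun i => by linarith [hdiag i]
  have hED : E * D = 1 := by
    rw [hE, hD, Matrix.diagonal_mul_diagonal]
    have : (fun i => (-(A i i))⁻¹ * -(A i i)) = fun _ => (1:ℝ) := by
      funext i
      exact inv_mul_cancel₀ (ne_of_gt (hdpos i))
    rw [this, Matrix.diagonal_one]
  have hDE : D * E = 1 := by
    rw [hE, hD, Matrix.diagonal_mul_diagonal]
    have : (fun i => -(A i i) * (-(A i i))⁻¹) = fun _ => (1:ℝ) := by
      funext i
      exact mul_inv_cancel₀ (ne_of_gt (hdpos i))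
    rw [this, Matrix.diagonal_one]
  set N := Matrix.of (fun i j => if i = j then (0:ℝ) else A i j) with hN
  set M := E * N with hM
  have hMapply : ∀ i j, M i j = (-(A i i))⁻¹ * N i j := fun i j => by
    rw [hM, hE, Matrix.diagonal_mul]
  have hNnonneg : ∀ i j, 0 ≤ N i j := by
    intro i j
    by_cases h : i = j
    · simp [hN, h]
    · simpa [hN, h] using hoff i j h
  have hMnonneg : ∀ i j, 0 ≤ M i j := fun i j => by
    rw [hMapply]
    exact mul_nonneg (le_of_lt (inv_pos.mpr (hdpos i))) (hNnonneg i j)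
  have hMedge : ∀ i j, M i j ≠ 0 → edgeRel S j i := by
    intro i j hij
    rw [hMapply] at hij
    have hNij : N i j ≠ 0 := fun h => hij (by rw [h, mul_zero])
    have hij' : i ≠ j := by
      intro h
      apply hNij
      simp [hN, h]
    have hA : A i j ≠ 0 := by simpa [hN, hij'] using hNij
    exact ⟨fun h => hij' h.symm, fun h => hA ((h0 i j).mpr h)⟩
  have hwalk : ∀ k i j, (M ^ k) i j ≠ 0 → ∃ f : ℕ → Fin d, f 0 = j ∧ f k = i ∧
      ∀ u, u < k → edgeRel S (f u) (f (u + 1)) := by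
    intro k
    induction k with
    | zero =>
      intro i j hij
      have : i = j := by
        by_contra h
        rw [pow_zero] at hij
        exact hij (Matrix.one_apply_ne h)
      refine ⟨fun _ => j, rfl, this ▸ rfl, fun u hu => by omega⟩
    | succ k ih =>
      intro i j hij
      rw [pow_succ', Matrix.mul_apply] at hij
      obtain ⟨c, hc⟩ : ∃ c, M i c * (M ^ k) c j ≠ 0 := by
        by_contra hall
        push_neg at hall
        exact hij (Finset.sum_eq_zero fun c _ => hall c)
      have h1 : M i c ≠ 0 := fun h => hc (by rw [h, zero_mul])
      have h2 : (M ^ k) c j ≠ 0 := fun h => hc (by rw [h, mul_zero])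
      obtain ⟨f, hf0, hfk, hfe⟩ := ih c j h2
      refine ⟨fun u => if u ≤ k then f u else i, by simp [hf0], by simp, ?_⟩
      intro u hu
      rcases Nat.lt_or_ge u k with h' | h'
      · simpa [Nat.le_of_lt h', Nat.succ_le_of_lt h'] using hfe u h'
      · have huk : u = k := by omega
        subst huk
        have hif : ¬ (u + 1 ≤ u) := by omega
        simpa [hif, hfk] using hMedge i c h1
  have hMd : M ^ d = 0 := by
    ext i j
    rw [Matrix.zero_apply]
    by_contra hij
    obtain ⟨f, _, _, hfe⟩ := hwalk d i j hij
    exact absurd (walk_lt_of_acyclic hac hfe) (lt_irrefl d)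
  set B := ∑ k ∈ Finset.range d, M ^ k with hB
  have hBM : B * (1 - M) = 1 := by
    have hg := geom_sum_mul M d
    rw [hMd] at hg
    have h1 : B * (M - 1) = -1 := by rw [hB, hg, zero_sub]
    calc B * (1 - M) = -(B * (M - 1)) := by rw [← Matrix.mul_neg, neg_sub]
      _ = 1 := by rw [h1, neg_neg]
  have hDN : D * M = N := by
    rw [hM, ← Matrix.mul_assoc, hDE, Matrix.one_mul]
  have hDNA : D - N = -A := by
    ext i j
    by_cases h : i = j
    · subst h
      simp [hD, hN]
    · simp [hD, hN, h, Matrix.diagonal_apply_ne _ h]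
  have hDinv : D * (1 - M) = -A := by
    rw [Matrix.mul_sub, Matrix.mul_one, hDN, hDNA]
  set W := B * E with hW
  have hWnA : W * (-A) = 1 := by
    rw [← hDinv, hW]
    calc B * E * (D * (1 - M)) = B * (E * D * (1 - M)) := by
          rw [Matrix.mul_assoc, Matrix.mul_assoc]
      _ = B * (1 - M) := by rw [hED, Matrix.one_mul]
      _ = 1 := hBM
  have hWA : W * A = -1 := by
    have h1 : -(W * A) = 1 := by rw [← Matrix.mul_neg]; exact hWnA
    rw [← neg_neg (W * A), h1]
  have hMpow : ∀ k (i j : Fin d), 0 ≤ (M ^ k) i j := by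
    intro k
    induction k with
    | zero =>
      intro i j
      rw [pow_zero]
      by_cases h : i = j
      · subst h
        rw [Matrix.one_apply_eq]
        exact zero_le_one
      · rw [Matrix.one_apply_ne h]
    | succ k ih =>
      intro i j
      rw [pow_succ, Matrix.mul_apply]
      exact Finset.sum_nonneg fun c _ => mul_nonneg (ih i c) (hMnonneg c j)
  have hBnonneg : ∀ i j, 0 ≤ B i j := by
    intro i j
    rw [hB, Matrix.sum_apply]
    exact Finset.sum_nonneg fun k _ => hMpow k i j
  have hWentry : ∀ i, W ℓ i = B ℓ i * (-(A i i))⁻¹ := fun i => by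
    rw [hW, hE, Matrix.mul_diagonal]
  -- positivity at 0
  obtain ⟨n, hn, f, hf0, hfn, hfe⟩ := transGen_walk hpath
  have hnd : n < d := walk_lt_of_acyclic hac hfe
  have hMn : ∀ k (f : ℕ → Fin d), (∀ u, u < k → edgeRel S (f u) (f (u + 1))) →
      0 < (M ^ k) (f k) (f 0) := by
    intro k
    induction k with
    | zero => intro f _; simp [Matrix.one_apply]
    | succ k ih =>
      intro f hf
      rw [pow_succ', Matrix.mul_apply]
      have hMedgepos : 0 < M (f (k + 1)) (f k) := by
        have hed := hf k (by omega)
        have hne : f (k + 1) ≠ f k := fun h => hed.1 h.symm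
        have hS : S (f (k + 1)) (f k) ≠ 0 := hed.2
        have hA : A (f (k + 1)) (f k) ≠ 0 := fun h => hS ((h0 _ _).mp h)
        have hApos : 0 < A (f (k + 1)) (f k) :=
          lt_of_le_of_ne (hoff _ _ hne) (Ne.symm hA)
        rw [hMapply]
        apply mul_pos (inv_pos.mpr (hdpos _))
        simpa [hN, hne] using hApos
      have hpos : 0 < M (f (k + 1)) (f k) * (M ^ k) (f k) (f 0) :=
        mul_pos hMedgepos (ih f fun u hu => hf u (by omega))
      exact Finset.sum_pos' (fun c _ => mul_nonneg (hMnonneg _ _) (hMpow _ _ _))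
        ⟨f k, Finset.mem_univ _, hpos⟩
  have hB0 : 0 < B ℓ 0 := by
    rw [hB, Matrix.sum_apply]
    apply Finset.sum_pos' (fun k _ => hMpow k ℓ 0)
    refine ⟨n, Finset.mem_range.mpr hnd, ?_⟩
    have := hMn n f hfe
    rwa [hf0, hfn] at this
  refine ⟨fun i => W ℓ i, fun i => ?_, ?_, ?_⟩
  · show 0 ≤ W ℓ i
    rw [hWentry]
    exact mul_nonneg (hBnonneg ℓ i) (le_of_lt (inv_pos.mpr (hdpos i)))
  · show 0 < W ℓ 0
    rw [hWentry]
    exact mul_pos hB0 (inv_pos.mpr (hdpos 0))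
  · funext j
    have h1 : ((fun i => W ℓ i) ᵥ* A) j = (W * A) ℓ j := by
      rw [Matrix.mul_apply]
      simp [Matrix.vecMul, dotProduct]
    rw [Pi.add_apply, Pi.zero_apply, h1, hWA, Matrix.neg_apply, Matrix.one_apply,
      Pi.single_apply]
    by_cases h : ℓ = j
    · simp [h]
    · simp [h, Ne.symm h]

lemma no_cycle [NeZero d] (S : Matrix (Fin d) (Fin d) ℝ)
    (hsgn : ∀ i j, S i j = -1 ∨ S i j = 0 ∨ S i j = 1)
    (hMz : ∀ i j, i ≠ j → 0 ≤ S i j)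
    (hdiag01 : ∀ i, S i i = 0 ∨ S i i = -1)
    (σ : Equiv.Perm (Fin d)) (hcyc : σ.IsCycle) (hσS : ∀ v, σ v ≠ v → S (σ v) v ≠ 0)
    (hyp : ∀ A : Matrix (Fin d) (Fin d) ℝ,
      (∀ i j, Real.sign (A i j) = S i j) → IsHurwitz A) :
    False := by
  classical
  set g := σ.support.card with hg
  have hg2 : 2 ≤ g := hcyc.two_le_card_support
  set K : ℝ := (Nat.factorial d) * 2 ^ d + 2 with hK
  have hfact : (0:ℝ) < (Nat.factorial d) * 2 ^ d := by positivity
  have hK2 : (2:ℝ) ≤ K := by rw [hK]; linarith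
  have hK0 : (0:ℝ) < K := by linarith
  have hK1 : (1:ℝ) ≤ K := by linarith
  set A : Matrix (Fin d) (Fin d) ℝ := Matrix.of (fun i j =>
    if i = j then S i i else if σ j = i then K else K⁻¹ * S i j) with hA
  have hAdiag : ∀ i, A i i = S i i := fun i => by simp [hA]
  have hAcyc : ∀ j, σ j ≠ j → A (σ j) j = K := by
    intro j hj
    simp [hA, hj]
  have hAoff : ∀ i j, i ≠ j → σ j ≠ i → A i j = K⁻¹ * S i j := by
    intro i j h1 h2
    simp [hA, h1, h2]
  have hSoff1 : ∀ j, σ j ≠ j → S (σ j) j = 1 := by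
    intro j hj
    rcases hsgn (σ j) j with h3 | h3 | h3
    · exact absurd (h3 ▸ hMz (σ j) j hj) (by norm_num)
    · exact absurd h3 (hσS j hj)
    · exact h3
  have hAsign : ∀ i j, Real.sign (A i j) = S i j := by
    intro i j
    by_cases h : i = j
    · subst h
      rw [hAdiag]
      rcases hdiag01 i with h1 | h1 <;> rw [h1]
      · exact Real.sign_zero
      · exact Real.sign_of_neg (by norm_num)
    · by_cases h2 : σ j = i
      · have hmoved : σ j ≠ j := by rw [h2]; exact h
        rw [← h2, hAcyc j hmoved, hSoff1 j hmoved]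
        exact Real.sign_of_pos hK0
      · rw [hAoff i j h h2]
        rcases hsgn i j with h3 | h3 | h3
        · exact absurd (h3 ▸ hMz i j h) (by norm_num)
        · rw [h3, mul_zero, Real.sign_zero]
        · rw [h3, mul_one]
          exact Real.sign_of_pos (by positivity)
  have hH := hyp A hAsign
  have hpos := hurwitz_charpoly_pos A hH 1 zero_le_one
  rw [charpoly_eval, Matrix.diagonal_one] at hpos
  set B := (1 : Matrix (Fin d) (Fin d) ℝ) - A with hB
  have hBdiag : ∀ i, B i i = 1 - S i i := by
    intro i
    rw [hB, Matrix.sub_apply, Matrix.one_apply_eq, hAdiag]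
  have hBdiag1 : ∀ i, 1 ≤ B i i ∧ B i i ≤ 2 := by
    intro i
    rcases hdiag01 i with h1 | h1 <;> rw [hBdiag, h1] <;> norm_num
  have hBoff : ∀ i j, i ≠ j → B i j = -A i j := by
    intro i j h
    rw [hB, Matrix.sub_apply, Matrix.one_apply_ne h, zero_sub]
  have hBK : ∀ j, σ j ≠ j → B (σ j) j = -K := by
    intro j hj
    rw [hBoff _ _ hj, hAcyc j hj]
  rw [Matrix.det_apply'] at hpos
  set P := ∏ i ∈ σ.supportᶜ, B i i with hP
  have hP1 : 1 ≤ P := by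
    rw [hP]
    calc (1:ℝ) = ∏ _i ∈ σ.supportᶜ, (1:ℝ) := by rw [Finset.prod_const, one_pow]
      _ ≤ ∏ i ∈ σ.supportᶜ, B i i :=
        Finset.prod_le_prod (fun i _ => zero_le_one) (fun i _ => (hBdiag1 i).1)
  have hterm : ((Equiv.Perm.sign σ : ℤ) : ℝ) * ∏ i, B (σ i) i = -(K ^ g * P) := by
    have hsplit : ∏ i, B (σ i) i =
        (∏ i ∈ σ.support, B (σ i) i) * ∏ i ∈ σ.supportᶜ, B (σ i) i :=
      (Finset.prod_mul_prod_compl σ.support _).symm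
    have h1 : ∏ i ∈ σ.support, B (σ i) i = (-K) ^ g := by
      rw [Finset.prod_congr rfl (fun i hi => hBK i (Equiv.Perm.mem_support.mp hi)),
        Finset.prod_const, hg]
    have h2 : ∏ i ∈ σ.supportᶜ, B (σ i) i = P := by
      apply Finset.prod_congr rfl
      intro i hi
      rw [Equiv.Perm.notMem_support.mp (Finset.mem_compl.mp hi)]
    have hsign : ((Equiv.Perm.sign σ : ℤ) : ℝ) = -(-1 : ℝ) ^ g := by
      rw [hcyc.sign, hg]
      push_cast
      ring
    have h11 : ((-1:ℝ) ^ g) * ((-1:ℝ) ^ g) = 1 := by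
      rw [← pow_add]
      exact Even.neg_one_pow ⟨g, by ring⟩
    rw [hsplit, h1, h2, hsign]
    have hnegK : (-K : ℝ) ^ g = (-1:ℝ) ^ g * K ^ g := by rw [neg_pow]
    rw [hnegK]
    calc -(-1:ℝ) ^ g * ((-1) ^ g * K ^ g * P)
        = -(((-1:ℝ) ^ g * (-1) ^ g) * (K ^ g * P)) := by ring
      _ = -(K ^ g * P) := by rw [h11, one_mul]
  have hbound : ∀ τ : Equiv.Perm (Fin d), τ ≠ σ →
      |∏ i, B (τ i) i| ≤ 2 ^ d * K ^ (g - 1) := by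
    intro τ hτ
    set T := σ.support.filter (fun j => τ j = σ j) with hT
    have hTsub : T ⊆ σ.support := Finset.filter_subset _ _
    have hTmem : ∀ j, j ∈ T ↔ (τ j = σ j ∧ σ j ≠ j) := by
      intro j
      rw [hT, Finset.mem_filter, Equiv.Perm.mem_support]
      tauto
    have hTcard : T.card ≤ g := hg ▸ Finset.card_le_card hTsub
    have habsK : ∀ j, j ∈ T → |B (τ j) j| = K := by
      intro j hj
      obtain ⟨h1, h2⟩ := (hTmem j).mp hj
      rw [h1, hBK j h2, abs_neg, abs_of_pos hK0]
    have habs2 : ∀ j, j ∉ T → |B (τ j) j| ≤ 2 := by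
      intro j hj
      by_cases h : τ j = j
      · rw [h]
        have h5 := hBdiag1 j
        rw [abs_of_nonneg (by linarith [h5.1])]
        exact h5.2
      · have hne : σ j ≠ τ j := by
          intro he
          exact hj ((hTmem j).mpr ⟨he.symm, fun hh => h (by rw [← he, hh])⟩)
        rw [hBoff (τ j) j h, hAoff (τ j) j h hne, abs_neg, abs_mul]
        have hSabs : |S (τ j) j| ≤ 1 := by
          rcases hsgn (τ j) j with h3 | h3 | h3 <;> rw [h3] <;> norm_num
        have hKinv : |K⁻¹| ≤ 1 := by
          rw [abs_of_nonneg (by positivity)]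
          exact inv_le_one_of_one_le₀ hK1
        nlinarith [abs_nonneg (K⁻¹), abs_nonneg (S (τ j) j)]
    have hKinvabs : ∀ j, j ∉ T → τ j ≠ j → σ j = j → |B (τ j) j| ≤ K⁻¹ := by
      intro j hj h1 h2
      have hne : σ j ≠ τ j := by rw [h2]; exact fun hh => h1 hh.symm
      rw [hBoff (τ j) j h1, hAoff (τ j) j h1 hne, abs_neg, abs_mul]
      have hSabs : |S (τ j) j| ≤ 1 := by
        rcases hsgn (τ j) j with h3 | h3 | h3 <;> rw [h3] <;> norm_num
      have h4 : |K⁻¹| = K⁻¹ := abs_of_nonneg (by positivity)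
      nlinarith [abs_nonneg (K⁻¹)]
    have habs_prod : |∏ i, B (τ i) i| = ∏ i, |B (τ i) i| := Finset.abs_prod _ _
    have hprod_le : ∀ s : Finset (Fin d), T ⊆ s →
        ∏ i ∈ s, |B (τ i) i| ≤ K ^ T.card * 2 ^ d := by
      intro s hs
      calc ∏ i ∈ s, |B (τ i) i| ≤ ∏ i ∈ s, (if i ∈ T then K else 2) := by
            apply Finset.prod_le_prod (fun i _ => abs_nonneg _)
            intro i _
            by_cases h : i ∈ T
            · rw [if_pos h, habsK i h]
            · rw [if_neg h]; exact habs2 i h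
        _ = (∏ i ∈ s.filter (· ∈ T), K) * ∏ i ∈ s.filter (¬ · ∈ T), (2:ℝ) :=
            Finset.prod_ite _ _
        _ = K ^ (s.filter (· ∈ T)).card * 2 ^ (s.filter (¬ · ∈ T)).card := by
            rw [Finset.prod_const, Finset.prod_const]
        _ ≤ K ^ T.card * 2 ^ d := by
            have he1 : s.filter (· ∈ T) = T := by
              apply Finset.Subset.antisymm
              · intro x hx
                exact (Finset.mem_filter.mp hx).2
              · intro x hx
                exact Finset.mem_filter.mpr ⟨hs hx, hx⟩
            rw [he1]
            have he2 : (s.filter (¬ · ∈ T)).card ≤ d := by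
              calc (s.filter (¬ · ∈ T)).card ≤ s.card := Finset.card_filter_le _ _
                _ ≤ (Finset.univ : Finset (Fin d)).card := Finset.card_le_card (Finset.subset_univ _)
                _ = d := by rw [Finset.card_univ, Fintype.card_fin]
            exact mul_le_mul_of_nonneg_left
              (pow_le_pow_right₀ one_le_two he2) (by positivity)
    rcases Nat.lt_or_ge T.card g with hlt | hge
    · calc |∏ i, B (τ i) i| = ∏ i, |B (τ i) i| := habs_prod
        _ ≤ K ^ T.card * 2 ^ d := hprod_le Finset.univ (Finset.subset_univ _)
        _ ≤ K ^ (g - 1) * 2 ^ d := by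
            apply mul_le_mul_of_nonneg_right _ (by positivity)
            exact pow_le_pow_right₀ hK1 (by omega)
        _ = 2 ^ d * K ^ (g - 1) := by ring
    · have hTeq : T = σ.support := Finset.eq_of_subset_of_card_le hTsub (by omega)
      obtain ⟨j0, hj0⟩ : ∃ x, τ x ≠ σ x := by
        by_contra hall
        push_neg at hall
        exact hτ (Equiv.ext hall)
      have hj0supp : j0 ∉ σ.support := by
        intro hmem
        rw [← hTeq] at hmem
        exact hj0 ((hTmem j0).mp hmem).1
      have hfix : σ j0 = j0 := Equiv.Perm.notMem_support.mp hj0supp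
      have hj0T : j0 ∉ T := by
        intro hmem
        exact hj0 ((hTmem j0).mp hmem).1
      have hmove : τ j0 ≠ j0 := fun hh => hj0 (hh.trans hfix.symm)
      have hsplit := Finset.mul_prod_erase Finset.univ (fun i => |B (τ i) i|)
        (Finset.mem_univ j0)
      have hTsub2 : T ⊆ Finset.univ.erase j0 := by
        intro x hx
        exact Finset.mem_erase.mpr ⟨fun he => hj0T (he ▸ hx), Finset.mem_univ x⟩
      calc |∏ i, B (τ i) i| = ∏ i, |B (τ i) i| := habs_prod
        _ = |B (τ j0) j0| * ∏ i ∈ Finset.univ.erase j0, |B (τ i) i| := hsplit.symm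
        _ ≤ K⁻¹ * (K ^ T.card * 2 ^ d) := by
            apply mul_le_mul (hKinvabs j0 hj0T hmove hfix) (hprod_le _ hTsub2)
              (Finset.prod_nonneg fun i _ => abs_nonneg _) (by positivity)
        _ = 2 ^ d * K ^ (g - 1) := by
            have hg1 : T.card = g := by omega
            have hKg : K ^ g = K * K ^ (g - 1) := by
              rw [← pow_succ']
              congr 1
              omega
            rw [hg1, hKg]
            have hKne : K ≠ 0 := ne_of_gt hK0
            field_simp
  -- assemble
  have hsplit := Finset.add_sum_erase Finset.univ
    (fun τ => ((Equiv.Perm.sign τ : ℤ) : ℝ) * ∏ i, B (τ i) i) (Finset.mem_univ σ)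
  have hrest : ∑ τ ∈ Finset.univ.erase σ, ((Equiv.Perm.sign τ : ℤ) : ℝ) * ∏ i, B (τ i) i ≤
      (Nat.factorial d : ℝ) * (2 ^ d * K ^ (g - 1)) := by
    have h1 : ∀ τ ∈ Finset.univ.erase σ,
        ((Equiv.Perm.sign τ : ℤ) : ℝ) * ∏ i, B (τ i) i ≤ 2 ^ d * K ^ (g - 1) := by
      intro τ hτmem
      have hτ : τ ≠ σ := (Finset.mem_erase.mp hτmem).1
      have hsabs : |((Equiv.Perm.sign τ : ℤ) : ℝ)| = 1 := by
        rcases Int.units_eq_one_or (Equiv.Perm.sign τ) with h | h <;> rw [h] <;> norm_num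
      calc ((Equiv.Perm.sign τ : ℤ) : ℝ) * ∏ i, B (τ i) i
          ≤ |((Equiv.Perm.sign τ : ℤ) : ℝ) * ∏ i, B (τ i) i| := le_abs_self _
        _ = |((Equiv.Perm.sign τ : ℤ) : ℝ)| * |∏ i, B (τ i) i| := abs_mul _ _
        _ = |∏ i, B (τ i) i| := by rw [hsabs, one_mul]
        _ ≤ 2 ^ d * K ^ (g - 1) := hbound τ hτ
    calc ∑ τ ∈ Finset.univ.erase σ, ((Equiv.Perm.sign τ : ℤ) : ℝ) * ∏ i, B (τ i) i
        ≤ (Finset.univ.erase σ).card • (2 ^ d * K ^ (g - 1) : ℝ) :=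
          Finset.sum_le_card_nsmul _ _ _ h1
      _ = ((Finset.univ.erase σ).card : ℝ) * (2 ^ d * K ^ (g - 1)) := by
          rw [nsmul_eq_mul]
      _ ≤ (Nat.factorial d : ℝ) * (2 ^ d * K ^ (g - 1)) := by
          apply mul_le_mul_of_nonneg_right _ (by positivity)
          have : (Finset.univ.erase σ).card ≤ Nat.factorial d := by
            calc (Finset.univ.erase σ).card ≤ (Finset.univ : Finset (Equiv.Perm (Fin d))).card :=
                  Finset.card_le_card (Finset.erase_subset _ _)
              _ = Nat.factorial d := by
                  rw [Finset.card_univ, Fintype.card_perm, Fintype.card_fin]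
          exact_mod_cast this
  rw [← hsplit] at hpos
  beta_reduce at hpos
  rw [hterm] at hpos
  have hKg : K ^ g = K * K ^ (g - 1) := by
    rw [← pow_succ']
    congr 1
    omega
  have hKg1pos : (0:ℝ) < K ^ (g - 1) := pow_pos hK0 _
  have hKgpos : (0:ℝ) < K ^ g := pow_pos hK0 _
  nlinarith [hpos, hrest, hP1, hKg1pos, hKgpos]

lemma sign_self {x : ℝ} (h : x = -1 ∨ x = 0 ∨ x = 1) : Real.sign x = x := by
  rcases h with h | h | h <;> subst h
  · exact Real.sign_of_neg (by norm_num)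
  · exact Real.sign_zero
  · exact Real.sign_of_pos (by norm_num)

lemma diag_not_one [NeZero d] (S : Matrix (Fin d) (Fin d) ℝ)
    (hsgn : ∀ i j, S i j = -1 ∨ S i j = 0 ∨ S i j = 1)
    (hyp : ∀ A : Matrix (Fin d) (Fin d) ℝ,
      (∀ i j, Real.sign (A i j) = S i j) → IsHurwitz A)
    (k : Fin d) (hk : S k k = 1) : False := by
  classical
  set A : Matrix (Fin d) (Fin d) ℝ := Matrix.of (fun i j =>
    if i = k ∧ j = k then (d : ℝ) else S i j) with hA
  have hd1 : (1:ℝ) ≤ (d:ℝ) := by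
    have := Nat.one_le_iff_ne_zero.mpr (NeZero.ne d)
    exact_mod_cast this
  have hsign : ∀ i j, Real.sign (A i j) = S i j := by
    intro i j
    by_cases h : i = k ∧ j = k
    · have hAv : A i j = (d : ℝ) := by simp [hA, h.1, h.2]
      rw [hAv, h.1, h.2, hk]
      exact Real.sign_of_pos (by linarith)
    · have hAv : A i j = S i j := by simp [hA, h]
      rw [hAv]
      exact sign_self (hsgn i j)
  have htr := hurwitz_trace_neg A (hyp A hsign)
  have htr2 : A.trace = ∑ i, A i i := rfl
  have hAkk : A k k = (d : ℝ) := by simp [hA]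
  have hge : ∀ i, i ≠ k → (-1:ℝ) ≤ A i i := by
    intro i hi
    have hAv : A i i = S i i := by simp [hA, hi]
    rw [hAv]
    rcases hsgn i i with h | h | h <;> rw [h] <;> norm_num
  have hsum : (1:ℝ) ≤ ∑ i, A i i := by
    have hsplit := Finset.add_sum_erase Finset.univ (fun i => A i i) (Finset.mem_univ k)
    have hcard : (Finset.univ.erase k).card = d - 1 := by
      rw [Finset.card_erase_of_mem (Finset.mem_univ k), Finset.card_univ, Fintype.card_fin]
    have hlb := Finset.card_nsmul_le_sum (Finset.univ.erase k) (fun i => A i i) (-1)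
      (fun i hi => hge i (Finset.mem_erase.mp hi).1)
    rw [hcard, nsmul_eq_mul] at hlb
    have hdc : ((d - 1 : ℕ) : ℝ) = (d : ℝ) - 1 := by
      have : 1 ≤ d := Nat.one_le_iff_ne_zero.mpr (NeZero.ne d)
      push_cast [this]
      ring
    rw [hdc] at hlb
    rw [← hsplit]
    beta_reduce
    rw [hAkk]
    nlinarith
  rw [htr2] at htr
  linarith

lemma path_exists [NeZero d] (S : Matrix (Fin d) (Fin d) ℝ)
    (hsgn : ∀ i j, S i j = -1 ∨ S i j = 0 ∨ S i j = 1)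
    (hMz : ∀ i j, i ≠ j → 0 ≤ S i j)
    (hdiag : ∀ i, S i i = -1)
    (hac : ∀ m, ¬ Relation.TransGen (edgeRel S) m m)
    (ℓ : Fin d) (hℓ : ℓ ≠ 0)
    (w : Fin d → ℝ) (hw0 : ∀ i, 0 ≤ w i) (hwpos : 0 < w 0)
    (hweq : w ᵥ* S + Pi.single ℓ 1 = 0) :
    Relation.TransGen (edgeRel S) 0 ℓ := by
  classical
  have heq : ∀ j, (∑ i, w i * S i j) + (if j = ℓ then (1:ℝ) else 0) = 0 := by
    intro j
    have hj := congrFun hweq j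
    simpa [Matrix.vecMul, dotProduct, Pi.single_apply] using hj
  have hstep : ∀ j, j ≠ ℓ → 0 < w j → ∃ i, edgeRel S j i ∧ 0 < w i := by
    intro j hj hwj
    have h1 := heq j
    rw [if_neg hj, add_zero] at h1
    have hsplit := Finset.add_sum_erase Finset.univ (fun i => w i * S i j) (Finset.mem_univ j)
    rw [← hsplit] at h1
    beta_reduce at h1
    rw [hdiag j] at h1
    by_contra hno
    push_neg at hno
    have hle : ∀ i ∈ Finset.univ.erase j, w i * S i j ≤ 0 := by
      intro i hi
      have hij := (Finset.mem_erase.mp hi).1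
      rcases hsgn i j with h3 | h3 | h3
      · exact absurd (h3 ▸ hMz i j hij) (by norm_num)
      · rw [h3, mul_zero]
      · have hedge : edgeRel S j i := ⟨fun hh => hij hh.symm, by rw [h3]; norm_num⟩
        rw [h3, mul_one]
        exact hno i hedge
    have hsum := Finset.sum_nonpos hle
    nlinarith
  set next : Fin d → Fin d := fun j =>
    if h : j ≠ ℓ ∧ 0 < w j then Classical.choose (hstep j h.1 h.2) else j with hnext
  set f : ℕ → Fin d := fun n => next^[n] 0 with hf
  have hf0 : f 0 = 0 := rfl
  have hfsucc : ∀ n, f (n + 1) = next (f n) := by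
    intro n
    rw [hf]
    exact Function.iterate_succ_apply' next n 0
  have claim : ∀ n : ℕ, (∀ t, t ≤ n → f t ≠ ℓ) →
      0 < w (f n) ∧ ∀ u, u < n → edgeRel S (f u) (f (u + 1)) := by
    intro n
    induction n with
    | zero =>
      intro _
      rw [hf0]
      exact ⟨hwpos, fun u hu => by omega⟩
    | succ n ih =>
      intro h
      obtain ⟨hw, he⟩ := ih (fun t ht => h t (by omega))
      have hcond : f n ≠ ℓ ∧ 0 < w (f n) := ⟨h n (by omega), hw⟩
      have hnextval : f (n + 1) = Classical.choose (hstep (f n) hcond.1 hcond.2) := by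
        rw [hfsucc, hnext]
        exact dif_pos hcond
      have hspec := Classical.choose_spec (hstep (f n) hcond.1 hcond.2)
      constructor
      · rw [hnextval]
        exact hspec.2
      · intro u hu
        rcases Nat.lt_or_ge u n with h' | h'
        · exact he u h'
        · have huu : u = n := by omega
          subst huu
          rw [hnextval]
          exact hspec.1
  obtain ⟨t0, ht0le, ht0⟩ : ∃ t, t ≤ d ∧ f t = ℓ := by
    by_contra hnone
    push_neg at hnone
    obtain ⟨_, he⟩ := claim d (fun t ht => hnone t ht)
    exact absurd (walk_lt_of_acyclic hac he) (lt_irrefl d)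
  have hex : ∃ t, f t = ℓ := ⟨t0, ht0⟩
  set t1 := Nat.find hex with ht1
  have ht1eq : f t1 = ℓ := Nat.find_spec hex
  have ht1min : ∀ u, u < t1 → f u ≠ ℓ := fun u hu => Nat.find_min hex hu
  have ht1pos : 0 < t1 := by
    rcases Nat.eq_zero_or_pos t1 with h | h
    · exfalso
      apply hℓ
      rw [← ht1eq, h, hf0]
    · exact h
  have hedges : ∀ u, u < t1 → edgeRel S (f u) (f (u + 1)) := by
    obtain ⟨hw, he⟩ := claim (t1 - 1) (fun t ht => ht1min t (by omega))
    intro u hu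
    rcases Nat.lt_or_ge u (t1 - 1) with h' | h'
    · exact he u h'
    · have huu : u = t1 - 1 := by omega
      subst huu
      have hcond : f (t1 - 1) ≠ ℓ ∧ 0 < w (f (t1 - 1)) := ⟨ht1min _ (by omega), hw⟩
      have hnextval : f (t1 - 1 + 1) = Classical.choose (hstep (f (t1 - 1)) hcond.1 hcond.2) := by
        rw [hfsucc, hnext]
        exact dif_pos hcond
      have hspec := Classical.choose_spec (hstep (f (t1 - 1)) hcond.1 hcond.2)
      rw [hnextval]
      exact hspec.1
  have := walk_transGen f t1 0 ht1pos (fun u _ hu => hedges u hu)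
  rwa [hf0, ht1eq] at this

end StructErg

open StructErg

theorem structural_ergodicity_iff [NeZero d] (S : Matrix (Fin d) (Fin d) ℝ)
    (hsgn : ∀ i j, S i j = -1 ∨ S i j = 0 ∨ S i j = 1)
    (hMz : ∀ i j, i ≠ j → 0 ≤ S i j)
    (ℓ : Fin d) (hℓ : ℓ ≠ 0) :
    (∀ A : Matrix (Fin d) (Fin d) ℝ, (∀ i j, Real.sign (A i j) = S i j) →
        IsHurwitz A ∧
          ∃ w : Fin d → ℝ, (∀ i, 0 ≤ w i) ∧ 0 < w 0 ∧ w ᵥ* A + Pi.single ℓ 1 = 0)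
    ↔ ((∀ i, S i i = -1) ∧ (∀ m, ¬ Relation.TransGen (edgeRel S) m m) ∧
        Relation.TransGen (edgeRel S) 0 ℓ) := by
  constructor
  · intro hyp
    have hypH : ∀ A : Matrix (Fin d) (Fin d) ℝ,
        (∀ i j, Real.sign (A i j) = S i j) → IsHurwitz A := fun A hA => (hyp A hA).1
    have hdiag01 : ∀ i, S i i = 0 ∨ S i i = -1 := by
      intro i
      rcases hsgn i i with h | h | h
      · exact Or.inr h
      · exact Or.inl h
      · exact absurd h (fun hh => diag_not_one S hsgn hypH i hh)
    have hac : ∀ m, ¬ Relation.TransGen (edgeRel S) m m := by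
      intro m hm
      obtain ⟨σ, hcyc, hσS⟩ := exists_cycle_perm hm
      exact no_cycle S hsgn hMz hdiag01 σ hcyc hσS hypH
    have hSsign : ∀ i j, Real.sign (S i j) = S i j := fun i j => sign_self (hsgn i j)
    have hdiag : ∀ i, S i i = -1 := by
      intro i
      rcases hdiag01 i with h | h
      · exfalso
        have hpos := hurwitz_charpoly_pos S (hypH S hSsign) 0 le_rfl
        rw [charpoly_eval] at hpos
        have hdz : Matrix.diagonal (fun _ : Fin d => (0:ℝ)) - S = -S := by
          rw [Matrix.diagonal_zero, zero_sub]
        rw [hdz] at hpos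
        have hdet : (-S).det = ∏ i, (-S) i i :=
          det_eq_prod_diag_of_acyclic S hac _
            (fun i j hij h0 => by rw [Matrix.neg_apply, h0, neg_zero])
        rw [hdet] at hpos
        have hz : ∏ i, (-S) i i = 0 :=
          Finset.prod_eq_zero (Finset.mem_univ i) (by rw [Matrix.neg_apply, h, neg_zero])
        rw [hz] at hpos
        exact lt_irrefl 0 hpos
      · exact h
    refine ⟨hdiag, hac, ?_⟩
    obtain ⟨-, w, hw1, hw2, hw3⟩ := hyp S hSsign
    exact path_exists S hsgn hMz hdiag hac ℓ hℓ w hw1 hw2 hw3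
  · rintro ⟨hdiag, hac, hpath⟩ A hA
    have hAoff : ∀ i j, i ≠ j → 0 ≤ A i j := by
      intro i j h
      by_contra hneg
      push_neg at hneg
      have hs := hA i j
      rw [Real.sign_of_neg hneg] at hs
      have := hMz i j h
      rw [← hs] at this
      linarith
    have hA0 : ∀ i j, A i j = 0 ↔ S i j = 0 := by
      intro i j
      constructor
      · intro h
        rw [← hA i j, h, Real.sign_zero]
      · intro h
        have hs := hA i j
        rw [h] at hs
        exact Real.sign_eq_zero_iff.mp hs
    have hAdiag : ∀ i, A i i < 0 := by
      intro i
      have hs := hA i i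
      rw [hdiag i] at hs
      rcases lt_trichotomy (A i i) 0 with h | h | h
      · exact h
      · rw [h, Real.sign_zero] at hs
        norm_num at hs
      · rw [Real.sign_of_pos h] at hs
        norm_num at hs
    refine ⟨hurwitz_of_acyclic S A hac (fun i j hij h0 => (hA0 i j).mpr h0) hAdiag, ?_⟩
    exact exists_w S A hac hA0 hAoff hAdiag ℓ hpath
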